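/- Let G be a d-regular graph (d ≥ 4) containing no copy of H_d, and fix vertices a ≠ b and e ∈ N(a) with the property that b ∈ N(a) implies e = b. Define A = {(a',a'') : a' ∈ N(a)\{e}, a'' ∈ N(a')} and B = {(b',e') : b' ∈ N(b), e' ∈ N(b')}, and say (a',a'') ⊢ (b',e') if b' ∉ {a',a''} and (a'' ∈ N(b') implies e' = a''). Then for every A₀ ⊆ A, (d/(d−1))·|A₀| ≤ |cmp(A₀)|, where cmp(A₀) = {(b',e') ∈ B : ∃ (a',a'') ∈ A₀ with (a',a'') ⊢ (b',e')}. -/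

import Mathlib

open Finset

namespace S17
variable {V : Type*} [Fintype V] [DecidableEq V] (G : SimpleGraph V) [DecidableRel G.Adj]
variable (d : ℕ) (a b e : V) (A₀ : Finset (V × V))

def Cf : Finset (V × V) :=
  ((Finset.univ.filter (fun q : V × V =>
      q.1 ∈ G.neighborFinset b ∧ q.2 ∈ G.neighborFinset q.1)).filter
    (fun q => ∃ p ∈ A₀, q.1 ≠ p.1 ∧ q.1 ≠ p.2 ∧
      (p.2 ∈ G.neighborFinset q.1 → q.2 = p.2)))

def cov (b' : V) : ℕ := ((Cf G b A₀).filter (fun q => q.1 = b')).card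

def NF : Finset V := (G.neighborFinset b).filter (fun b' => cov G b A₀ b' < d)

def Vb (b' : V) : Finset V :=
  (A₀.filter (fun p => p.1 ≠ b' ∧ p.2 ≠ b' ∧ p.2 ∈ G.neighborFinset b')).image Prod.snd

def Us : Finset V := A₀.image Prod.snd
def Ts : Finset V := A₀.image Prod.fst
def Ws (w : V) : Finset V := (A₀.filter (fun p => p.2 = w)).image Prod.fst
def dlt (w : V) : ℕ := (A₀.filter (fun p => p.2 = w)).card
def xx (a' : V) : ℕ := (A₀.filter (fun p => p.1 = a')).card
def nu (w : V) : ℕ := ((NF G d b A₀).filter (fun b' => w ∈ Vb G A₀ b')).card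

end S17

section Main
open S17
variable {V : Type*} [Fintype V] [DecidableEq V] {G : SimpleGraph V} [DecidableRel G.Adj]
variable {d : ℕ} {a b e : V} {A₀ : Finset (V × V)}
set_option linter.unusedSectionVars false
set_option linter.unusedVariables false


lemma card_nb (hreg : G.IsRegularOfDegree d) (v : V) : (G.neighborFinset v).card = d :=
  hreg v

lemma mem_Cf {q : V × V} : q ∈ Cf G b A₀ ↔
    (q.1 ∈ G.neighborFinset b ∧ q.2 ∈ G.neighborFinset q.1) ∧
    ∃ p ∈ A₀, q.1 ≠ p.1 ∧ q.1 ≠ p.2 ∧ (p.2 ∈ G.neighborFinset q.1 → q.2 = p.2) := by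
  simp [Cf, and_assoc]

lemma cov_le (hreg : G.IsRegularOfDegree d) (b' : V) : cov G b A₀ b' ≤ d := by
  have h := Finset.card_le_card_of_injOn (f := Prod.snd)
    (s := (Cf G b A₀).filter (fun q => q.1 = b')) (t := G.neighborFinset b')
    (by
      intro q hq
      simp only [Finset.mem_coe, Finset.mem_filter] at hq
      have hq1 := (mem_Cf.mp hq.1).1.2
      rw [hq.2] at hq1
      exact hq1)
    (by
      intro q hq q' hq' hqq
      simp only [Finset.coe_filter, Set.mem_setOf_eq] at hq hq'
      exact Prod.ext (hq.2.trans hq'.2.symm) hqq)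
  rw [card_nb hreg] at h
  exact h

lemma Vb_le_cov (hb' : b' ∈ G.neighborFinset b) :
    (Vb G A₀ b').card ≤ cov G b A₀ b' := by
  apply Finset.card_le_card_of_injOn (f := fun w => (b', w))
  · intro w hw
    simp only [Vb, Finset.mem_coe, Finset.mem_image, Finset.mem_filter] at hw
    obtain ⟨p, ⟨hpA, hp1, hp2, hp3⟩, hpw⟩ := hw
    refine Finset.mem_filter.mpr ⟨mem_Cf.mpr ⟨⟨hb', by rw [hpw] at hp3; exact hp3⟩, p, hpA, Ne.symm hp1, ?_, ?_⟩, rfl⟩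
    · rw [← hpw]; exact Ne.symm hp2
    · intro _; exact hpw.symm
  · intro w _ w' _ h
    exact (Prod.mk.injEq _ _ _ _).mp h |>.2

lemma s_eq : (Cf G b A₀).card = ∑ b' ∈ G.neighborFinset b, cov G b A₀ b' := by
  apply Finset.card_eq_sum_card_fiberwise
  intro q hq
  exact (mem_Cf.mp hq).1.1

lemma m_eq_sum_dlt : A₀.card = ∑ w ∈ Us A₀, dlt A₀ w := by
  apply Finset.card_eq_sum_card_fiberwise
  intro p hp
  exact Finset.mem_image_of_mem _ hp

lemma m_eq_sum_xx : A₀.card = ∑ a' ∈ Ts A₀, xx A₀ a' := by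
  apply Finset.card_eq_sum_card_fiberwise
  intro p hp
  exact Finset.mem_image_of_mem _ hp

lemma dlt_eq_Ws (w : V) : dlt A₀ w = (Ws A₀ w).card := by
  unfold dlt Ws
  rw [Finset.card_image_of_injOn]
  intro p hp p' hp' h
  simp only [Finset.coe_filter, Set.mem_setOf_eq] at hp hp'
  exact Prod.ext h (hp.2.trans hp'.2.symm)

lemma Ws_sub_Ts (w : V) : Ws A₀ w ⊆ Ts A₀ :=
  Finset.image_subset_image (Finset.filter_subset _ _)

lemma not_mem_Ws (w : V)
    (hA₀ : ∀ p ∈ A₀, p.1 ∈ (G.neighborFinset a).erase e ∧ p.2 ∈ G.neighborFinset p.1) :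
    w ∉ Ws A₀ w := by
  intro hw
  simp only [Ws, Finset.mem_image, Finset.mem_filter] at hw
  obtain ⟨p, ⟨hpA, hp2⟩, hp1⟩ := hw
  have := (hA₀ p hpA).2
  rw [hp2, hp1] at this
  exact G.irrefl ((SimpleGraph.mem_neighborFinset _ _ _).mp this)

lemma Ws_sub_nbhd (w : V)
    (hA₀ : ∀ p ∈ A₀, p.1 ∈ (G.neighborFinset a).erase e ∧ p.2 ∈ G.neighborFinset p.1) :
    Ws A₀ w ⊆ G.neighborFinset w := by
  intro a' ha'
  simp only [Ws, Finset.mem_image, Finset.mem_filter] at ha'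
  obtain ⟨p, ⟨hpA, hp2⟩, hp1⟩ := ha'
  have := (hA₀ p hpA).2
  rw [hp2, hp1] at this
  rw [SimpleGraph.mem_neighborFinset] at this ⊢
  exact this.symm

lemma xx_le (hreg : G.IsRegularOfDegree d)
    (hA₀ : ∀ p ∈ A₀, p.1 ∈ (G.neighborFinset a).erase e ∧ p.2 ∈ G.neighborFinset p.1)
    (a' : V) : xx A₀ a' ≤ d := by
  have h := Finset.card_le_card_of_injOn (f := Prod.snd)
    (s := A₀.filter (fun p => p.1 = a')) (t := G.neighborFinset a')
    (by
      intro p hp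
      simp only [Finset.mem_coe, Finset.mem_filter] at hp
      have := (hA₀ p hp.1).2
      rwa [hp.2] at this)
    (by
      intro p hp p' hp' h
      simp only [Finset.coe_filter, Set.mem_setOf_eq] at hp hp'
      exact Prod.ext (hp.2.trans hp'.2.symm) h)
  rwa [card_nb hreg] at h

lemma t_le (hd : 4 ≤ d) (hreg : G.IsRegularOfDegree d) (he : e ∈ G.neighborFinset a)
    (hA₀ : ∀ p ∈ A₀, p.1 ∈ (G.neighborFinset a).erase e ∧ p.2 ∈ G.neighborFinset p.1) :
    (Ts A₀).card ≤ d - 1 := by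
  have hsub : Ts A₀ ⊆ (G.neighborFinset a).erase e := by
    intro a' ha'
    simp only [Ts, Finset.mem_image] at ha'
    obtain ⟨p, hpA, hp1⟩ := ha'
    rw [← hp1]; exact (hA₀ p hpA).1
  calc (Ts A₀).card ≤ ((G.neighborFinset a).erase e).card := Finset.card_le_card hsub
    _ = d - 1 := by rw [Finset.card_erase_of_mem he, card_nb hreg]

lemma dlt_pos {w : V} (hw : w ∈ Us A₀) : 1 ≤ dlt A₀ w := by
  simp only [Us, Finset.mem_image] at hw
  obtain ⟨p, hpA, hp2⟩ := hw
  exact Finset.card_pos.mpr ⟨p, Finset.mem_filter.mpr ⟨hpA, hp2⟩⟩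

lemma nonrich (hreg : G.IsRegularOfDegree d) {b' : V} (hb' : b' ∈ NF G d b A₀) :
    ∀ p ∈ A₀, p.1 ≠ b' → p.2 = b' ∨ p.2 ∈ G.neighborFinset b' := by
  intro p hpA hp1
  by_contra hcon
  push_neg at hcon
  obtain ⟨hp2, hp2'⟩ := hcon
  simp only [NF, Finset.mem_filter] at hb'
  have hcov : d ≤ cov G b A₀ b' := by
    have h := Finset.card_le_card_of_injOn (f := fun e' => (b', e'))
      (s := G.neighborFinset b') (t := (Cf G b A₀).filter (fun q => q.1 = b'))
      (by
        intro e' he'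
        refine Finset.mem_filter.mpr ⟨mem_Cf.mpr ⟨⟨hb'.1, he'⟩, p, hpA, Ne.symm hp1, Ne.symm hp2, ?_⟩, rfl⟩
        intro hmem
        exact absurd hmem hp2')
      (by intro x _ y _ h; exact ((Prod.mk.injEq _ _ _ _).mp h).2)
    rwa [card_nb hreg] at h
  omega

lemma w_in_Vb (hreg : G.IsRegularOfDegree d) {b' : V} (hb' : b' ∈ NF G d b A₀)
    {p : V × V} (hpA : p ∈ A₀) (hp1 : p.1 ≠ b') (hp2 : p.2 ≠ b') :
    p.2 ∈ Vb G A₀ b' := by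
  have hmem : p.2 ∈ G.neighborFinset b' := by
    rcases nonrich hreg hb' p hpA hp1 with h | h
    · exact absurd h hp2
    · exact h
  exact Finset.mem_image_of_mem _ (Finset.mem_filter.mpr ⟨hpA, hp1, hp2, hmem⟩)

lemma nu_ge2 (hreg : G.IsRegularOfDegree d) {w : V} (h2 : 2 ≤ dlt A₀ w) :
    (NF G d b A₀).card ≤ nu G d b A₀ w + (if w ∈ NF G d b A₀ then 1 else 0) := by
  have hsub : (NF G d b A₀).erase w ⊆ (NF G d b A₀).filter (fun b' => w ∈ Vb G A₀ b') := by
    intro b' hb'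
    rw [Finset.mem_erase] at hb'
    obtain ⟨hne, hbNF⟩ := hb'
    rw [dlt_eq_Ws] at h2
    obtain ⟨a', ha'W, ha'ne⟩ := Finset.exists_mem_ne (show 1 < (Ws A₀ w).card by omega) b'
    simp only [Ws, Finset.mem_image, Finset.mem_filter] at ha'W
    obtain ⟨p, ⟨hpA, hp2⟩, hp1⟩ := ha'W
    refine Finset.mem_filter.mpr ⟨hbNF, ?_⟩
    rw [← hp2]
    exact w_in_Vb hreg hbNF hpA (by rw [hp1]; exact ha'ne) (by rw [hp2]; exact hne.symm)
  have hcard := Finset.card_le_card hsub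
  by_cases hw : w ∈ NF G d b A₀
  · rw [Finset.card_erase_of_mem hw] at hcard
    simp only [hw, if_true, nu]
    omega
  · rw [Finset.erase_eq_self.mpr hw] at hcard
    simp only [hw, if_false, nu]
    omega

lemma nu_ge1 (hreg : G.IsRegularOfDegree d) {w : V} (hw : w ∈ Us A₀) :
    (NF G d b A₀).card ≤ nu G d b A₀ w + 2 := by
  simp only [Us, Finset.mem_image] at hw
  obtain ⟨p, hpA, hp2⟩ := hw
  have hsub : ((NF G d b A₀).erase w).erase p.1 ⊆
      (NF G d b A₀).filter (fun b' => w ∈ Vb G A₀ b') := by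
    intro b' hb'
    rw [Finset.mem_erase, Finset.mem_erase] at hb'
    obtain ⟨hne1, hne2, hbNF⟩ := hb'
    refine Finset.mem_filter.mpr ⟨hbNF, ?_⟩
    rw [← hp2]
    exact w_in_Vb hreg hbNF hpA (Ne.symm hne1) (by rw [hp2]; exact hne2.symm)
  have hcard := Finset.card_le_card hsub
  have h1 := Finset.card_erase_le (s := (NF G d b A₀).erase w) (a := p.1)
  have h2 := Finset.card_erase_le (s := NF G d b A₀) (a := w)
  have : (NF G d b A₀).card ≤ (((NF G d b A₀).erase w).erase p.1).card + 2 := by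
    have e1 := Finset.pred_card_le_card_erase (s := NF G d b A₀) (a := w)
    have e2 := Finset.pred_card_le_card_erase (s := (NF G d b A₀).erase w) (a := p.1)
    omega
  simp only [nu]
  omega

lemma pack (hreg : G.IsRegularOfDegree d)
    (hbe : b ∈ G.neighborFinset a → e = b)
    (hA₀ : ∀ p ∈ A₀, p.1 ∈ (G.neighborFinset a).erase e ∧ p.2 ∈ G.neighborFinset p.1)
    {w : V} (hw : w ∈ NF G d b A₀) (h2 : 2 ≤ dlt A₀ w) :
    dlt A₀ w + (NF G d b A₀).card ≤ d + (Ws A₀ w ∩ NF G d b A₀).card := by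
  classical
  set NFs := NF G d b A₀ with hNFs
  have hwb : w ∈ G.neighborFinset b := (Finset.mem_filter.mp hw).1
  have hbw : b ∈ G.neighborFinset w := by
    rw [SimpleGraph.mem_neighborFinset] at hwb ⊢; exact hwb.symm
  -- three disjoint pieces inside N(w)
  have hW : Ws A₀ w ⊆ G.neighborFinset w := Ws_sub_nbhd w hA₀
  have hNFsub : NFs.erase w ⊆ G.neighborFinset w := by
    intro b' hb'
    rw [Finset.mem_erase] at hb'
    obtain ⟨hne, hbNF⟩ := hb'
    rw [dlt_eq_Ws] at h2
    obtain ⟨a', ha'W, ha'ne⟩ := Finset.exists_mem_ne (show 1 < (Ws A₀ w).card by omega) b'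
    simp only [Ws, Finset.mem_image, Finset.mem_filter] at ha'W
    obtain ⟨p, ⟨hpA, hp2⟩, hp1⟩ := ha'W
    rcases nonrich hreg hbNF p hpA (by rw [hp1]; exact ha'ne) with h | h
    · exact absurd (hp2 ▸ h) hne.symm
    · rw [hp2] at h
      rw [SimpleGraph.mem_neighborFinset] at h ⊢
      exact h.symm
  have hbWs : b ∉ Ws A₀ w := by
    intro hbW
    simp only [Ws, Finset.mem_image, Finset.mem_filter] at hbW
    obtain ⟨p, ⟨hpA, hp2⟩, hp1⟩ := hbW
    have h1 := (hA₀ p hpA).1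
    rw [hp1] at h1
    rw [Finset.mem_erase] at h1
    exact h1.1 (hbe h1.2).symm
  have hbNFs : b ∉ NFs := by
    intro hbNF
    have : b ∈ G.neighborFinset b := (Finset.mem_filter.mp hbNF).1
    exact G.irrefl ((SimpleGraph.mem_neighborFinset _ _ _).mp this)
  -- union card
  have hdisj1 : Disjoint (Ws A₀ w \ NFs) (NFs.erase w) := by
    rw [Finset.disjoint_left]
    intro x hx hx'
    exact (Finset.mem_sdiff.mp hx).2 (Finset.mem_of_mem_erase hx')
  have hdisj2 : Disjoint ((Ws A₀ w \ NFs) ∪ NFs.erase w) {b} := by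
    rw [Finset.disjoint_right]
    intro x hx hx'
    rw [Finset.mem_singleton] at hx
    subst hx
    rcases Finset.mem_union.mp hx' with h | h
    · exact hbWs (Finset.mem_sdiff.mp h).1
    · exact hbNFs (Finset.mem_of_mem_erase h)
  have hsub : ((Ws A₀ w \ NFs) ∪ NFs.erase w) ∪ {b} ⊆ G.neighborFinset w := by
    intro x hx
    rcases Finset.mem_union.mp hx with h | h
    · rcases Finset.mem_union.mp h with h' | h'
      · exact hW (Finset.mem_sdiff.mp h').1
      · exact hNFsub h'
    · rw [Finset.mem_singleton] at h; subst h; exact hbw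
  have hcard := Finset.card_le_card hsub
  rw [Finset.card_union_of_disjoint hdisj2, Finset.card_union_of_disjoint hdisj1,
    Finset.card_singleton, card_nb hreg] at hcard
  have hkerase : (NFs.erase w).card = NFs.card - 1 := Finset.card_erase_of_mem hw
  have hWsplit : (Ws A₀ w).card ≤ (Ws A₀ w \ NFs).card + (Ws A₀ w ∩ NFs).card := by
    have := Finset.card_union_le (Ws A₀ w \ NFs) (Ws A₀ w ∩ NFs)
    rw [Finset.sdiff_union_inter] at this
    exact this
  have hk1 : 1 ≤ NFs.card := Finset.card_pos.mpr ⟨w, hw⟩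
  rw [dlt_eq_Ws]
  omega

lemma CB (hd : 4 ≤ d) (hreg : G.IsRegularOfDegree d)
    (hH : ∀ u v : V, u ≠ v →
      insert u (G.neighborFinset u) ≠ insert v (G.neighborFinset v))
    (hA₀ : ∀ p ∈ A₀, p.1 ∈ (G.neighborFinset a).erase e ∧ p.2 ∈ G.neighborFinset p.1)
    {b' a' : V} (hb' : b' ∈ NF G d b A₀) (hne : a' ≠ b') :
    xx A₀ a' ≤ d - 1 := by
  by_contra hcon
  push_neg at hcon
  have hxd : xx A₀ a' = d := by
    have := xx_le hreg hA₀ a'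
    omega
  -- the image of the fiber is all of N(a')
  set F := A₀.filter (fun p => p.1 = a') with hF
  have hxF : F.card = d := hxd
  have himg : F.image Prod.snd = G.neighborFinset a' := by
    apply Finset.eq_of_subset_of_card_le
    · intro w hw
      simp only [hF, Finset.mem_image, Finset.mem_filter] at hw
      obtain ⟨p, ⟨hpA, hp1⟩, hp2⟩ := hw
      have := (hA₀ p hpA).2
      rwa [hp1, hp2] at this
    · have hinj : (F.image Prod.snd).card = F.card := by
        apply Finset.card_image_of_injOn
        intro p hp p' hp' h
        simp only [hF, Finset.coe_filter, Set.mem_setOf_eq] at hp hp'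
        exact Prod.ext (hp.2.trans hp'.2.symm) h
      rw [hinj, card_nb hreg, hxF]
  have hall : ∀ w ∈ G.neighborFinset a', ∃ p ∈ A₀, p.1 = a' ∧ p.2 = w := by
    intro w hw
    rw [← himg] at hw
    simp only [hF, Finset.mem_image, Finset.mem_filter] at hw
    obtain ⟨p, ⟨hpA, hp1⟩, hp2⟩ := hw
    exact ⟨p, hpA, hp1, hp2⟩
  have hstep : ∀ w ∈ G.neighborFinset a', w = b' ∨ w ∈ G.neighborFinset b' := by
    intro w hw
    obtain ⟨p, hpA, hp1, hp2⟩ := hall w hw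
    rcases nonrich hreg hb' p hpA (by rw [hp1]; exact hne) with h | h
    · left; rw [← hp2]; exact h
    · right; rw [← hp2]; exact h
  by_cases hbb : b' ∈ G.neighborFinset a'
  · -- closed twins a' b'
    have hsub : insert a' (G.neighborFinset a') ⊆ insert b' (G.neighborFinset b') := by
      intro z hz
      rcases Finset.mem_insert.mp hz with h | h
      · subst h
        apply Finset.mem_insert_of_mem
        rw [SimpleGraph.mem_neighborFinset] at hbb ⊢
        exact hbb.symm
      · rcases hstep z h with h' | h'
        · subst h'; exact Finset.mem_insert_self _ _
        · exact Finset.mem_insert_of_mem h'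
    have hceq : (insert b' (G.neighborFinset b')).card ≤ (insert a' (G.neighborFinset a')).card := by
      rw [Finset.card_insert_of_notMem (by
            intro h; exact G.irrefl ((SimpleGraph.mem_neighborFinset _ _ _).mp h)),
          Finset.card_insert_of_notMem (by
            intro h; exact G.irrefl ((SimpleGraph.mem_neighborFinset _ _ _).mp h)),
          card_nb hreg, card_nb hreg]
    exact hH a' b' hne (Finset.eq_of_subset_of_card_le hsub hceq)
  · -- N(a') = N(b'), so cov b' = d, contradiction
    have hsub : G.neighborFinset a' ⊆ G.neighborFinset b' := by
      intro w hw
      rcases hstep w hw with h | h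
      · subst h; exact absurd hw hbb
      · exact h
    have heq : G.neighborFinset a' = G.neighborFinset b' :=
      Finset.eq_of_subset_of_card_le hsub (by rw [card_nb hreg, card_nb hreg])
    have hVb : G.neighborFinset b' ⊆ Vb G A₀ b' := by
      intro w hw
      obtain ⟨p, hpA, hp1, hp2⟩ := hall w (by rw [heq]; exact hw)
      have hwb' : w ≠ b' := by
        intro h; subst h
        exact G.irrefl ((SimpleGraph.mem_neighborFinset _ _ _).mp hw)
      have := w_in_Vb hreg hb' hpA (by rw [hp1]; exact hne) (by rw [hp2]; exact hwb')
      rwa [hp2] at this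
    have hcov : d ≤ cov G b A₀ b' := by
      calc d = (G.neighborFinset b').card := (card_nb hreg b').symm
        _ ≤ (Vb G A₀ b').card := Finset.card_le_card hVb
        _ ≤ cov G b A₀ b' := Vb_le_cov (Finset.mem_filter.mp hb').1
    have := (Finset.mem_filter.mp hb').2
    omega

lemma TK (hreg : G.IsRegularOfDegree d)
    (hH : ∀ u v : V, u ≠ v →
      insert u (G.neighborFinset u) ≠ insert v (G.neighborFinset v))
    (hk : (NF G d b A₀).card = d) {w : V} (hw : w ∈ NF G d b A₀)
    (h2 : 2 ≤ dlt A₀ w) : False := by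
  have hNFeq : NF G d b A₀ = G.neighborFinset b := by
    apply Finset.eq_of_subset_of_card_le (Finset.filter_subset _ _)
    rw [card_nb hreg]
    exact le_of_eq hk.symm
  have hwb : w ∈ G.neighborFinset b := (Finset.mem_filter.mp hw).1
  have hwnb : w ≠ b := by
    intro h; subst h
    exact G.irrefl ((SimpleGraph.mem_neighborFinset _ _ _).mp hwb)
  have hbw : b ∈ G.neighborFinset w := by
    rw [SimpleGraph.mem_neighborFinset] at hwb ⊢; exact hwb.symm
  have hNb : ∀ b' ∈ G.neighborFinset b, b' ≠ w → b' ∈ G.neighborFinset w := by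
    intro b' hb' hne
    have hbNF : b' ∈ NF G d b A₀ := by rw [hNFeq]; exact hb'
    rw [dlt_eq_Ws] at h2
    obtain ⟨a', ha'W, ha'ne⟩ := Finset.exists_mem_ne (show 1 < (Ws A₀ w).card by omega) b'
    simp only [Ws, Finset.mem_image, Finset.mem_filter] at ha'W
    obtain ⟨p, ⟨hpA, hp2⟩, hp1⟩ := ha'W
    rcases nonrich hreg hbNF p hpA (by rw [hp1]; exact ha'ne) with h | h
    · exact absurd (hp2 ▸ h) hne.symm
    · rw [hp2] at h
      rw [SimpleGraph.mem_neighborFinset] at h ⊢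
      exact h.symm
  have hsub : insert b (G.neighborFinset b) ⊆ insert w (G.neighborFinset w) := by
    intro z hz
    rcases Finset.mem_insert.mp hz with h | h
    · subst h; exact Finset.mem_insert_of_mem hbw
    · by_cases hzw : z = w
      · subst hzw; exact Finset.mem_insert_self _ _
      · exact Finset.mem_insert_of_mem (hNb z h hzw)
  have hceq : (insert w (G.neighborFinset w)).card ≤ (insert b (G.neighborFinset b)).card := by
    rw [Finset.card_insert_of_notMem (by
          intro h; exact G.irrefl ((SimpleGraph.mem_neighborFinset _ _ _).mp h)),
        Finset.card_insert_of_notMem (by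
          intro h; exact G.irrefl ((SimpleGraph.mem_neighborFinset _ _ _).mp h)),
        card_nb hreg, card_nb hreg]
  exact hH b w (Ne.symm hwnb) (Finset.eq_of_subset_of_card_le hsub hceq)

lemma u_le (hreg : G.IsRegularOfDegree d)
    (hH : ∀ u v : V, u ≠ v →
      insert u (G.neighborFinset u) ≠ insert v (G.neighborFinset v))
    (hA₀ : ∀ p ∈ A₀, p.1 ∈ (G.neighborFinset a).erase e ∧ p.2 ∈ G.neighborFinset p.1)
    (hk : 2 ≤ (NF G d b A₀).card) : (Us A₀).card ≤ d := by
  obtain ⟨β₁, hβ₁, β₂, hβ₂, hβne⟩ := Finset.one_lt_card.mp hk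
  have hmem : ∀ w ∈ Us A₀, w ∈ insert β₁ (G.neighborFinset β₁) ∩ insert β₂ (G.neighborFinset β₂) := by
    intro w hw
    simp only [Us, Finset.mem_image] at hw
    obtain ⟨p, hpA, hp2⟩ := hw
    rw [Finset.mem_inter]
    constructor
    · by_cases h : p.1 = β₁
      · apply Finset.mem_insert_of_mem
        have := (hA₀ p hpA).2
        rw [h] at this; rw [← hp2]; exact this
      · rcases nonrich hreg hβ₁ p hpA h with h' | h'
        · rw [← hp2, h']; exact Finset.mem_insert_self _ _
        · rw [← hp2]; exact Finset.mem_insert_of_mem h'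
    · by_cases h : p.1 = β₂
      · apply Finset.mem_insert_of_mem
        have := (hA₀ p hpA).2
        rw [h] at this; rw [← hp2]; exact this
      · rcases nonrich hreg hβ₂ p hpA h with h' | h'
        · rw [← hp2, h']; exact Finset.mem_insert_self _ _
        · rw [← hp2]; exact Finset.mem_insert_of_mem h'
  have hUs : Us A₀ ⊆ insert β₁ (G.neighborFinset β₁) ∩ insert β₂ (G.neighborFinset β₂) := hmem
  by_contra hcon
  push_neg at hcon
  have hc1 : (insert β₁ (G.neighborFinset β₁)).card = d + 1 := by
    rw [Finset.card_insert_of_notMem (by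
          intro h; exact G.irrefl ((SimpleGraph.mem_neighborFinset _ _ _).mp h)),
        card_nb hreg]
  have hc2 : (insert β₂ (G.neighborFinset β₂)).card = d + 1 := by
    rw [Finset.card_insert_of_notMem (by
          intro h; exact G.irrefl ((SimpleGraph.mem_neighborFinset _ _ _).mp h)),
        card_nb hreg]
  have hint : d + 1 ≤ (insert β₁ (G.neighborFinset β₁) ∩ insert β₂ (G.neighborFinset β₂)).card :=
    le_trans hcon (Finset.card_le_card hUs)
  have he1 : insert β₁ (G.neighborFinset β₁) ∩ insert β₂ (G.neighborFinset β₂) =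
      insert β₁ (G.neighborFinset β₁) :=
    Finset.eq_of_subset_of_card_le (Finset.inter_subset_left) (by omega)
  have he2 : insert β₁ (G.neighborFinset β₁) ∩ insert β₂ (G.neighborFinset β₂) =
      insert β₂ (G.neighborFinset β₂) :=
    Finset.eq_of_subset_of_card_le (Finset.inter_subset_right) (by omega)
  exact hH β₁ β₂ hβne (he1 ▸ he2)

lemma Vb_sub_Us (b' : V) : Vb G A₀ b' ⊆ Us A₀ :=
  Finset.image_subset_image (Finset.filter_subset _ _)

lemma sum_Vb_eq :
    ∑ b' ∈ NF G d b A₀, (Vb G A₀ b').card = ∑ w ∈ Us A₀, nu G d b A₀ w := by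
  have h1 : ∀ b', (Vb G A₀ b').card = ∑ w ∈ Us A₀, (if w ∈ Vb G A₀ b' then 1 else 0) := by
    intro b'
    rw [Finset.sum_ite_mem, Finset.inter_eq_right.mpr (Vb_sub_Us b'), Finset.sum_const, smul_eq_mul, mul_one]
  have h2 : ∀ w, nu G d b A₀ w = ∑ b' ∈ NF G d b A₀, (if w ∈ Vb G A₀ b' then 1 else 0) := by
    intro w
    rw [nu, Finset.card_filter]
  calc ∑ b' ∈ NF G d b A₀, (Vb G A₀ b').card
      = ∑ b' ∈ NF G d b A₀, ∑ w ∈ Us A₀, (if w ∈ Vb G A₀ b' then 1 else 0) := by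
        exact Finset.sum_congr rfl (fun b' _ => h1 b')
    _ = ∑ w ∈ Us A₀, ∑ b' ∈ NF G d b A₀, (if w ∈ Vb G A₀ b' then 1 else 0) := Finset.sum_comm
    _ = ∑ w ∈ Us A₀, nu G d b A₀ w := Finset.sum_congr rfl (fun w _ => (h2 w).symm)

lemma dlt_le_t (w : V) : dlt A₀ w ≤ (Ts A₀).card := by
  rw [dlt_eq_Ws]
  exact Finset.card_le_card (Ws_sub_Ts w)

lemma dlt_le_t1
    (hA₀ : ∀ p ∈ A₀, p.1 ∈ (G.neighborFinset a).erase e ∧ p.2 ∈ G.neighborFinset p.1)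
    {w : V} (hw : w ∈ Ts A₀) : dlt A₀ w + 1 ≤ (Ts A₀).card := by
  rw [dlt_eq_Ws]
  have hsub : Ws A₀ w ⊆ (Ts A₀).erase w := by
    intro x hx
    rw [Finset.mem_erase]
    refine ⟨?_, Ws_sub_Ts w hx⟩
    intro hxx
    exact not_mem_Ws w hA₀ (hxx ▸ hx)
  have := Finset.card_le_card hsub
  rw [Finset.card_erase_of_mem hw] at this
  have : 1 ≤ (Ts A₀).card := Finset.card_pos.mpr ⟨w, hw⟩
  have := Finset.card_le_card hsub
  rw [Finset.card_erase_of_mem hw] at this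
  omega

set_option maxHeartbeats 2000000 in
/-- the key natural-number inequality -/
theorem key (hd : 4 ≤ d) (hreg : G.IsRegularOfDegree d)
    (hH : ∀ u v : V, u ≠ v →
      insert u (G.neighborFinset u) ≠ insert v (G.neighborFinset v))
    (hab : a ≠ b) (he : e ∈ G.neighborFinset a)
    (hbe : b ∈ G.neighborFinset a → e = b)
    (hA₀ : ∀ p ∈ A₀, p.1 ∈ (G.neighborFinset a).erase e ∧ p.2 ∈ G.neighborFinset p.1) :
    d * A₀.card ≤ (d - 1) * (Cf G b A₀).card := by
  classical
  set k := (NF G d b A₀).card with hkdef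
  have hNFsub : NF G d b A₀ ⊆ G.neighborFinset b := Finset.filter_subset _ _
  have hkd : k ≤ d := by
    rw [hkdef]
    calc (NF G d b A₀).card ≤ (G.neighborFinset b).card := Finset.card_le_card hNFsub
      _ = d := card_nb hreg b
  have ht : (Ts A₀).card ≤ d - 1 := t_le hd hreg he hA₀
  -- lower bound for s
  have hs : d * (d - k) + ∑ b' ∈ NF G d b A₀, (Vb G A₀ b').card ≤ (Cf G b A₀).card := by
    rw [s_eq (A₀ := A₀) (b := b)]
    rw [← Finset.sum_sdiff hNFsub]
    have h1 : d * (d - k) ≤ ∑ b' ∈ G.neighborFinset b \ NF G d b A₀, cov G b A₀ b' := by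
      have hcovd : ∀ b' ∈ G.neighborFinset b \ NF G d b A₀, cov G b A₀ b' = d := by
        intro b' hb'
        rw [Finset.mem_sdiff] at hb'
        have h2 := cov_le (A₀ := A₀) (b := b) hreg b'
        have h3 : ¬ (cov G b A₀ b' < d) := by
          intro hlt
          exact hb'.2 (Finset.mem_filter.mpr ⟨hb'.1, hlt⟩)
        omega
      rw [Finset.sum_congr rfl hcovd, Finset.sum_const, smul_eq_mul,
        Finset.card_sdiff_of_subset hNFsub, card_nb hreg, mul_comm]
    have h2 : ∑ b' ∈ NF G d b A₀, (Vb G A₀ b').card ≤ ∑ b' ∈ NF G d b A₀, cov G b A₀ b' :=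
      Finset.sum_le_sum (fun b' hb' => Vb_le_cov (hNFsub hb'))
    omega
  have hcase : k = 0 ∨ k = 1 ∨ (2 ≤ k ∧ k ≤ d - 1) ∨ k = d := by omega
  rcases hcase with hk0 | hk1 | ⟨hk2, hkd1⟩ | hkd'
  · -- k = 0
    have hm : A₀.card ≤ (d - 1) * d := by
      rw [m_eq_sum_xx (A₀ := A₀)]
      calc ∑ a' ∈ Ts A₀, xx A₀ a' ≤ ∑ a' ∈ Ts A₀, d :=
            Finset.sum_le_sum (fun a' _ => xx_le hreg hA₀ a')
        _ = (Ts A₀).card * d := by rw [Finset.sum_const, smul_eq_mul]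
        _ ≤ (d - 1) * d := Nat.mul_le_mul_right d ht
    have hsd : d * d ≤ (Cf G b A₀).card := by
      rw [hk0] at hs
      simp only [Nat.sub_zero] at hs
      omega
    calc d * A₀.card ≤ d * ((d - 1) * d) := Nat.mul_le_mul_left d hm
      _ = (d - 1) * (d * d) := by ring
      _ ≤ (d - 1) * (Cf G b A₀).card := Nat.mul_le_mul_left _ hsd
  · -- k = 1
    have hcard1 : (NF G d b A₀).card = 1 := by omega
    obtain ⟨β, hβ⟩ := Finset.card_eq_one.mp hcard1
    have hβNF : β ∈ NF G d b A₀ := by rw [hβ]; exact Finset.mem_singleton_self β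
    set v := (Vb G A₀ β).card with hv
    have hs1 : d * (d - 1) + v ≤ (Cf G b A₀).card := by
      rw [hk1] at hs
      rwa [hβ, Finset.sum_singleton] at hs
    set M := min (d - 1) (v + 1) with hM
    have hxM : ∀ a', a' ≠ β → xx A₀ a' ≤ M := by
      intro a' hne
      rw [hM, le_min_iff]
      constructor
      · exact CB hd hreg hH hA₀ hβNF hne
      · -- xx a' ≤ v + 1 via image into insert β (Vb β)
        have h := Finset.card_le_card_of_injOn (f := Prod.snd)
          (s := A₀.filter (fun p => p.1 = a')) (t := insert β (Vb G A₀ β))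
          (by
            intro p hp
            rw [Finset.mem_coe, Finset.mem_filter] at hp
            by_cases hpβ : p.2 = β
            · rw [hpβ]; exact Finset.mem_insert_self _ _
            · exact Finset.mem_insert_of_mem
                (w_in_Vb hreg hβNF hp.1 (by rw [hp.2]; exact hne) hpβ))
          (by
            intro p hp p' hp' h
            simp only [Finset.coe_filter, Set.mem_setOf_eq] at hp hp'
            exact Prod.ext (hp.2.trans hp'.2.symm) h)
        calc xx A₀ a' ≤ (insert β (Vb G A₀ β)).card := h
          _ ≤ v + 1 := by rw [hv]; exact Finset.card_insert_le _ _
    have hMd : M ≤ d - 1 := min_le_left _ _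
    have hm : A₀.card ≤ d + (d - 2) * M := by
      rw [m_eq_sum_xx (A₀ := A₀)]
      by_cases hβT : β ∈ Ts A₀
      · have hsplit := Finset.add_sum_erase (Ts A₀) (xx A₀) hβT
        have herase : ((Ts A₀).erase β).card ≤ d - 2 := by
          rw [Finset.card_erase_of_mem hβT]
          omega
        have hsum2 : ∑ a' ∈ (Ts A₀).erase β, xx A₀ a' ≤ (d - 2) * M := by
          calc ∑ a' ∈ (Ts A₀).erase β, xx A₀ a'
              ≤ ∑ _a' ∈ (Ts A₀).erase β, M :=
                Finset.sum_le_sum (fun a' ha' => hxM a' (Finset.mem_erase.mp ha').1)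
            _ = ((Ts A₀).erase β).card * M := by rw [Finset.sum_const, smul_eq_mul]
            _ ≤ (d - 2) * M := Nat.mul_le_mul_right M herase
        have hxβ : xx A₀ β ≤ d := xx_le hreg hA₀ β
        omega
      · have hsum2 : ∑ a' ∈ Ts A₀, xx A₀ a' ≤ (d - 1) * M := by
          calc ∑ a' ∈ Ts A₀, xx A₀ a'
              ≤ ∑ _a' ∈ Ts A₀, M :=
                Finset.sum_le_sum (fun a' ha' => hxM a' (by rintro rfl; exact hβT ha'))
            _ = (Ts A₀).card * M := by rw [Finset.sum_const, smul_eq_mul]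
            _ ≤ (d - 1) * M := Nat.mul_le_mul_right M ht
        have : (d - 1) * M = (d - 2) * M + M := by
          have : d - 1 = (d - 2) + 1 := by omega
          rw [this, add_mul, one_mul]
        omega
    -- final arithmetic for k = 1
    have harith : d * (d + (d - 2) * M) ≤ (d - 1) * (d * (d - 1) + v) := by
      have h4 : (4:ℤ) ≤ (d:ℤ) := by exact_mod_cast hd
      have hMd' : (M:ℤ) ≤ (d:ℤ) - 1 := by
        have h := hMd
        zify [show (1:ℕ) ≤ d by omega] at h
        exact h
      have hMv' : (M:ℤ) ≤ (v:ℤ) + 1 := by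
        have h : M ≤ v + 1 := min_le_right _ _
        exact_mod_cast h
      have hM0 : (0:ℤ) ≤ (M:ℤ) := Int.natCast_nonneg M
      have hv0 : (0:ℤ) ≤ (v:ℤ) := Int.natCast_nonneg v
      zify [show (1:ℕ) ≤ d by omega, show (2:ℕ) ≤ d by omega]
      rcases le_or_gt ((d:ℤ) - 2) (v:ℤ) with hvc | hvc
      · nlinarith [mul_nonneg (mul_nonneg (by linarith : (0:ℤ) ≤ (d:ℤ))
            (by linarith : (0:ℤ) ≤ (d:ℤ) - 2)) (by linarith : (0:ℤ) ≤ (d:ℤ) - 1 - M),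
          mul_nonneg (by linarith : (0:ℤ) ≤ (d:ℤ) - 1) (by linarith : (0:ℤ) ≤ (v:ℤ) - ((d:ℤ) - 2)),
          mul_nonneg (by linarith : (0:ℤ) ≤ (d:ℤ) - 4) (by linarith : (0:ℤ) ≤ (d:ℤ))]
      · nlinarith [mul_nonneg (mul_nonneg (by linarith : (0:ℤ) ≤ (d:ℤ))
            (by linarith : (0:ℤ) ≤ (d:ℤ) - 2)) (by linarith : (0:ℤ) ≤ (v:ℤ) + 1 - M),
          mul_nonneg (by nlinarith : (0:ℤ) ≤ (d:ℤ)*(d:ℤ) - 3*(d:ℤ) + 1)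
            (by linarith : (0:ℤ) ≤ (d:ℤ) - 3 - (v:ℤ)),
          mul_nonneg (by linarith : (0:ℤ) ≤ 2*(d:ℤ) - 1) (by linarith : (0:ℤ) ≤ (d:ℤ) - 3)]
    calc d * A₀.card ≤ d * (d + (d - 2) * M) := Nat.mul_le_mul_left d hm
      _ ≤ (d - 1) * (d * (d - 1) + v) := harith
      _ ≤ (d - 1) * (Cf G b A₀).card := Nat.mul_le_mul_left _ hs1
  · -- 2 ≤ k ≤ d - 1
    obtain ⟨β₁, hβ₁, β₂, hβ₂, hβne⟩ := Finset.one_lt_card.mp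
      (show 1 < (NF G d b A₀).card by omega)
    have hxall : ∀ a' ∈ Ts A₀, xx A₀ a' ≤ d - 1 := by
      intro a' _
      by_cases h : a' = β₁
      · exact CB hd hreg hH hA₀ hβ₂ (by rw [h]; exact hβne)
      · exact CB hd hreg hH hA₀ hβ₁ h
    have hmt : A₀.card ≤ (Ts A₀).card * (d - 1) := by
      rw [m_eq_sum_xx (A₀ := A₀)]
      calc ∑ a' ∈ Ts A₀, xx A₀ a' ≤ ∑ a' ∈ Ts A₀, (d - 1) := Finset.sum_le_sum hxall
        _ = (Ts A₀).card * (d - 1) := by rw [Finset.sum_const, smul_eq_mul]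
    have hu : (Us A₀).card ≤ d :=
      u_le hreg hH hA₀ (show 2 ≤ (NF G d b A₀).card by omega)
    have hSnu : ∑ w ∈ Us A₀, nu G d b A₀ w = ∑ b' ∈ NF G d b A₀, (Vb G A₀ b').card :=
      (sum_Vb_eq).symm
    -- the summed per-w inequality, with defect c₀
    have hkey : ∃ c₀ : ℕ, c₀ ≤ 1 ∧
        A₀.card + (Us A₀).card * k ≤
          (∑ b' ∈ NF G d b A₀, (Vb G A₀ b').card) + (Us A₀).card * (d - 1) + c₀ := by
      rcases le_or_gt k (((NF G d b A₀) ∩ Ts A₀).card + 1) with hr1 | hr2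
      · -- defect version, with indicator of NF \ Ts
        have hPW : ∀ w ∈ Us A₀, dlt A₀ w + k ≤
            nu G d b A₀ w + ((d - 1) + (if w ∈ NF G d b A₀ \ Ts A₀ then 1 else 0)) := by
          intro w hw
          have h1 := dlt_pos hw
          rcases Nat.lt_or_ge (dlt A₀ w) 2 with hdl | hdl
          · have hn := nu_ge1 (b := b) hreg hw
            have hC : (0:ℕ) ≤ (if w ∈ NF G d b A₀ \ Ts A₀ then 1 else 0) := Nat.zero_le _
            omega
          · have hn := nu_ge2 (b := b) hreg hdl
            by_cases hNFw : w ∈ NF G d b A₀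
            · simp only [hNFw, if_true] at hn
              by_cases hTw : w ∈ Ts A₀
              · have hdt := dlt_le_t1 hA₀ hTw
                have hnm : w ∉ NF G d b A₀ \ Ts A₀ := fun hc => (Finset.mem_sdiff.mp hc).2 hTw
                simp only [hnm, if_false]
                omega
              · have hmm : w ∈ NF G d b A₀ \ Ts A₀ := Finset.mem_sdiff.mpr ⟨hNFw, hTw⟩
                simp only [hmm, if_true]
                have hdt := dlt_le_t (A₀ := A₀) w
                omega
            · simp only [hNFw, if_false] at hn
              have hdt := dlt_le_t (A₀ := A₀) w
              omega
        have hsum := Finset.sum_le_sum hPW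
        rw [Finset.sum_add_distrib, Finset.sum_const, smul_eq_mul, ← m_eq_sum_dlt] at hsum
        rw [Finset.sum_add_distrib, Finset.sum_add_distrib, Finset.sum_const, smul_eq_mul,
          hSnu] at hsum
        have hCsum : ∑ w ∈ Us A₀, (if w ∈ NF G d b A₀ \ Ts A₀ then 1 else 0) ≤ 1 := by
          rw [Finset.sum_ite_mem, Finset.sum_const, smul_eq_mul, mul_one]
          have h₁ : (Us A₀ ∩ (NF G d b A₀ \ Ts A₀)).card ≤ ((NF G d b A₀) \ Ts A₀).card :=
            Finset.card_le_card Finset.inter_subset_right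
          have h₂ : (NF G d b A₀ ∩ Ts A₀).card + ((NF G d b A₀) \ Ts A₀).card = k := by
            rw [hkdef]
            exact Finset.card_inter_add_card_sdiff _ _
          omega
        exact ⟨1, le_refl 1, by omega⟩
      · -- strong version using packing
        have hPW : ∀ w ∈ Us A₀, dlt A₀ w + k ≤ nu G d b A₀ w + (d - 1) := by
          intro w hw
          have h1 := dlt_pos hw
          rcases Nat.lt_or_ge (dlt A₀ w) 2 with hdl | hdl
          · have hn := nu_ge1 (b := b) hreg hw
            omega
          · have hn := nu_ge2 (b := b) hreg hdl
            by_cases hNFw : w ∈ NF G d b A₀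
            · simp only [hNFw, if_true] at hn
              by_cases hTw : w ∈ Ts A₀
              · have hdt := dlt_le_t1 hA₀ hTw
                omega
              · have hp := pack hreg hbe hA₀ hNFw hdl
                have ho : (Ws A₀ w ∩ NF G d b A₀).card ≤ ((NF G d b A₀) ∩ Ts A₀).card := by
                  apply Finset.card_le_card
                  intro x hx
                  rw [Finset.mem_inter] at hx ⊢
                  exact ⟨hx.2, Ws_sub_Ts w hx.1⟩
                omega
            · simp only [hNFw, if_false] at hn
              have hdt := dlt_le_t (A₀ := A₀) w
              omega
        have hsum := Finset.sum_le_sum hPW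
        rw [Finset.sum_add_distrib, Finset.sum_const, smul_eq_mul, ← m_eq_sum_dlt] at hsum
        rw [Finset.sum_add_distrib, Finset.sum_const, smul_eq_mul, hSnu] at hsum
        exact ⟨0, Nat.zero_le 1, by omega⟩
    obtain ⟨c₀, hc₀, hsum⟩ := hkey
    -- final arithmetic: m + t ≤ d*(d-k) + SV
    have hfin : A₀.card + (Ts A₀).card ≤
        d * (d - k) + ∑ b' ∈ NF G d b A₀, (Vb G A₀ b').card := by
      have hZ : ((d:ℤ) - 1 - k) * ((Us A₀).card : ℤ) ≤ ((d:ℤ) - 1 - k) * d := by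
        apply mul_le_mul_of_nonneg_left
        · exact_mod_cast hu
        · have hkk : k ≤ d - 1 := hkd1
          have : (k:ℤ) ≤ (d:ℤ) - 1 := by omega
          linarith
      have h1 : ((A₀.card : ℤ)) + ((Us A₀).card : ℤ) * k ≤
          ((∑ b' ∈ NF G d b A₀, (Vb G A₀ b').card : ℕ) : ℤ) +
            ((Us A₀).card : ℤ) * ((d:ℤ) - 1) + c₀ := by
        have h := hsum
        zify [show (1:ℕ) ≤ d by omega] at h
        convert h using 2
        push_cast
        ring
      have h2 : ((Ts A₀).card : ℤ) ≤ (d:ℤ) - 1 := by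
        have := ht
        omega
      have h3 : (c₀ : ℤ) ≤ 1 := by exact_mod_cast hc₀
      have hgoal : ((A₀.card : ℤ)) + (Ts A₀).card ≤ (d:ℤ) * ((d:ℤ) - k) +
          ((∑ b' ∈ NF G d b A₀, (Vb G A₀ b').card : ℕ) : ℤ) := by
        nlinarith [h1, h2, h3, hZ]
      have hdd : (4:ℤ) ≤ (d:ℤ) := by exact_mod_cast hd
      zify [hkd]
      push_cast at hgoal ⊢
      linarith [hgoal]
    -- conclude
    have hmd : d * A₀.card ≤ (d - 1) * (A₀.card + (Ts A₀).card) := by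
      have h9 : d = (d - 1) + 1 := by omega
      have hmt' : A₀.card ≤ (d - 1) * (Ts A₀).card := by
        rw [mul_comm]; exact hmt
      calc d * A₀.card = ((d - 1) + 1) * A₀.card := by rw [← h9]
        _ = (d - 1) * A₀.card + A₀.card := by ring
        _ ≤ (d - 1) * A₀.card + (d - 1) * (Ts A₀).card := Nat.add_le_add_left hmt' _
        _ = (d - 1) * (A₀.card + (Ts A₀).card) := by ring
    calc d * A₀.card ≤ (d - 1) * (A₀.card + (Ts A₀).card) := hmd
      _ ≤ (d - 1) * (d * (d - k) + ∑ b' ∈ NF G d b A₀, (Vb G A₀ b').card) :=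
          Nat.mul_le_mul_left _ hfin
      _ ≤ (d - 1) * (Cf G b A₀).card := Nat.mul_le_mul_left _ hs
  · -- k = d
    have hPW : ∀ w ∈ Us A₀, d * dlt A₀ w ≤ (d - 1) * nu G d b A₀ w := by
      intro w hw
      have h1 := dlt_pos hw
      rcases Nat.lt_or_ge (dlt A₀ w) 2 with hdl | hdl
      · have hn := nu_ge1 (b := b) hreg hw
        have hnu : d - 2 ≤ nu G d b A₀ w := by omega
        have hdlt1 : dlt A₀ w = 1 := by omega
        rw [hdlt1, mul_one]
        calc d ≤ 3 * (d - 2) := by omega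
          _ ≤ (d - 1) * (d - 2) := Nat.mul_le_mul_right _ (by omega)
          _ ≤ (d - 1) * nu G d b A₀ w := Nat.mul_le_mul_left _ hnu
      · by_cases hNFw : w ∈ NF G d b A₀
        · exact (TK hreg hH (show (NF G d b A₀).card = d by omega) hNFw hdl).elim
        · have hn := nu_ge2 (b := b) hreg hdl
          simp only [hNFw, if_false] at hn
          have hdt : dlt A₀ w ≤ d - 1 := le_trans (dlt_le_t (A₀ := A₀) w) ht
          calc d * dlt A₀ w ≤ d * (d - 1) := Nat.mul_le_mul_left _ hdt
            _ = (d - 1) * d := by ring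
            _ ≤ (d - 1) * nu G d b A₀ w := Nat.mul_le_mul_left _ (by omega)
    have hsum := Finset.sum_le_sum hPW
    rw [← Finset.mul_sum, ← Finset.mul_sum, ← m_eq_sum_dlt, ← sum_Vb_eq (d := d) (b := b)] at hsum
    have hVs : ∑ b' ∈ NF G d b A₀, (Vb G A₀ b').card ≤ (Cf G b A₀).card := by omega
    calc d * A₀.card ≤ (d - 1) * ∑ b' ∈ NF G d b A₀, (Vb G A₀ b').card := hsum
      _ ≤ (d - 1) * (Cf G b A₀).card := Nat.mul_le_mul_left _ hVs



end Main

open S17 in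
theorem stmt17 {V : Type*} [Fintype V] [DecidableEq V] (G : SimpleGraph V)
    [DecidableRel G.Adj] (d : ℕ) (hd : 4 ≤ d) (hreg : G.IsRegularOfDegree d)
    (hH : ∀ u v : V, u ≠ v →
      insert u (G.neighborFinset u) ≠ insert v (G.neighborFinset v))
    (a b e : V) (hab : a ≠ b) (he : e ∈ G.neighborFinset a)
    (hbe : b ∈ G.neighborFinset a → e = b)
    (A₀ : Finset (V × V))
    (hA₀ : A₀ ⊆ Finset.univ.filter (fun p : V × V =>
      p.1 ∈ (G.neighborFinset a).erase e ∧ p.2 ∈ G.neighborFinset p.1)) :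
    (d : ℚ) / ((d : ℚ) - 1) * A₀.card ≤
      ((Finset.univ.filter (fun q : V × V =>
          q.1 ∈ G.neighborFinset b ∧ q.2 ∈ G.neighborFinset q.1)).filter
        (fun q => ∃ p ∈ A₀, q.1 ≠ p.1 ∧ q.1 ≠ p.2 ∧
          (p.2 ∈ G.neighborFinset q.1 → q.2 = p.2))).card := by
  have hA₀' : ∀ p ∈ A₀, p.1 ∈ (G.neighborFinset a).erase e ∧ p.2 ∈ G.neighborFinset p.1 := by
    intro p hp
    have := hA₀ hp
    simpa using this
  have hk := key hd hreg hH hab he hbe hA₀'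
  have hd1 : (1:ℕ) ≤ d := by omega
  have hcast : ((d - 1 : ℕ) : ℚ) = (d : ℚ) - 1 := by
    push_cast [Nat.cast_sub hd1]; ring
  have hpos : (0:ℚ) < (d:ℚ) - 1 := by
    have : (4:ℚ) ≤ (d:ℚ) := by exact_mod_cast hd
    linarith
  rw [div_mul_eq_mul_div, div_le_iff₀ hpos]
  have h2 : ((d * A₀.card : ℕ) : ℚ) ≤ (((d-1) * (Cf G b A₀).card : ℕ) : ℚ) := by
    exact_mod_cast hk
  push_cast at h2
  rw [hcast] at h2
  calc (d:ℚ) * A₀.card ≤ ((d:ℚ) - 1) * (Cf G b A₀).card := by exact_mod_cast h2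
    _ = _ := by rw [mul_comm]; rfl
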